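/- For y ≤ x in a Coxeter group W, the polynomial Ξ_{y,x}(q) = Σ_{y ≤ y' ≤ x' ≤ x} Q_{y,y'}(q) R_{y',x'}(q) P_{x',x}(q) is a monic polynomial in q of degree |x| - |y|. -/

import Mathlib

open Finset Polynomial LaurentPolynomial

/-- The Bruhat order associated to a Coxeter system: `u ≤ v` if and only if `v` can be obtained
from `u` by successively multiplying on the right by reflections, each multiplication
increasing the length. -/
def CoxeterSystem.bruhatLE {I W : Type*} [Group W] {M : CoxeterMatrix I}
    (cs : CoxeterSystem M W) (u v : W) : Prop :=
  Relation.ReflTransGen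
    (fun a b => ∃ t, cs.IsReflection t ∧ b = a * t ∧ cs.length a < cs.length b) u v

/-- Kazhdan–Lusztig data on a poset `W` (intended to be a Coxeter group with its Bruhat order)
with length function `ℓ`: the Kazhdan–Lusztig polynomials `P`, the `R`-polynomials `R`, and the
inverse Kazhdan–Lusztig polynomials `Q`, together with their standard defining properties:
normalization on the diagonal, degree bounds, the bar-involution identities of
Kazhdan–Lusztig (1980), and the inversion formula relating `Q` and `P`. -/
structure KLData (W : Type*) [DecidableEq W] [PartialOrder W] [LocallyFiniteOrder W] (ℓ : W → ℕ) where
  P : W → W → Polynomial ℤ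
  R : W → W → Polynomial ℤ
  Q : W → W → Polynomial ℤ
  P_diag : ∀ x, P x x = 1
  R_diag : ∀ x, R x x = 1
  Q_diag : ∀ x, Q x x = 1
  P_natDegree_le : ∀ ⦃y x⦄, y < x → (P y x).natDegree ≤ (ℓ x - ℓ y - 1) / 2
  Q_natDegree_le : ∀ ⦃y x⦄, y < x → (Q y x).natDegree ≤ (ℓ x - ℓ y - 1) / 2
  R_monic : ∀ ⦃y x⦄, y ≤ x → (R y x).Monic
  R_natDegree : ∀ ⦃y x⦄, y ≤ x → (R y x).natDegree = ℓ x - ℓ y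
  bar_P : ∀ ⦃y x⦄, y ≤ x → invert (toLaurent (P y x)) =
    (∑ u ∈ Icc y x, toLaurent (R y u) * toLaurent (P u x)) * T ((ℓ y : ℤ) - ℓ x)
  bar_R : ∀ ⦃y x⦄, y ≤ x → invert (toLaurent (R y x)) =
    (-1) ^ (ℓ x + ℓ y) * toLaurent (R y x) * T ((ℓ y : ℤ) - ℓ x)
  bar_Q : ∀ ⦃y x⦄, y ≤ x → invert (toLaurent (Q y x)) =
    (∑ v ∈ Icc y x, toLaurent (Q y v) * toLaurent (R v x)) * T ((ℓ y : ℤ) - ℓ x)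
  QP_inversion : ∀ ⦃y x⦄, y ≤ x →
    ∑ z ∈ Icc y x, (-1) ^ (ℓ y + ℓ z) * Q y z * P z x = if y = x then 1 else 0

/-- The polynomial `Ξ_{y,x}(q) = Σ_{y ≤ y' ≤ x' ≤ x} Q_{y,y'}(q) R_{y',x'}(q) P_{x',x}(q)`. -/
noncomputable def KLData.Xi {W : Type*} [DecidableEq W] [PartialOrder W] [LocallyFiniteOrder W] {ℓ : W → ℕ}
    (kl : KLData W ℓ) (y x : W) : Polynomial ℤ :=
  ∑ y' ∈ Icc y x, ∑ x' ∈ Icc y' x, kl.Q y y' * kl.R y' x' * kl.P x' x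

/-- For `y ≤ x` in a Coxeter group `W`, the polynomial `Ξ_{y,x}` is a monic
polynomial in `q` of degree `|x| - |y|`. -/
theorem xi_monic_of_degree {I W : Type*} [Group W] [DecidableEq W] [PartialOrder W]
    [LocallyFiniteOrder W] {M : CoxeterMatrix I} (cs : CoxeterSystem M W)
    (hBruhat : ∀ u v : W, u ≤ v ↔ cs.bruhatLE u v)
    (kl : KLData W cs.length) (y x : W) (hyx : y ≤ x) :
    (kl.Xi y x).Monic ∧ (kl.Xi y x).natDegree + cs.length y = cs.length x := by
  classical
  have hlen : ∀ u v : W, u ≤ v → u = v ∨ cs.length u < cs.length v := by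
    intro u v huv
    rw [hBruhat] at huv
    induction huv with
    | refl => exact Or.inl rfl
    | tail h1 h2 ih =>
      obtain ⟨t, _, _, hlt⟩ := h2
      right
      rcases ih with rfl | h
      · exact hlt
      · exact h.trans hlt
  have hle : ∀ u v : W, u ≤ v → cs.length u ≤ cs.length v := by
    intro u v huv
    rcases hlen u v huv with rfl | h
    · exact le_rfl
    · exact h.le
  have hstrict : ∀ u v : W, u < v → cs.length u < cs.length v := by
    intro u v huv
    rcases hlen u v huv.le with h | h
    · exact absurd h huv.ne
    · exact h
  set d := cs.length x - cs.length y with hd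
  have hterm : ∀ y' x' : W, y ≤ y' → y' ≤ x' → x' ≤ x → ¬(y' = y ∧ x' = x) →
      (kl.Q y y' * kl.R y' x' * kl.P x' x).degree < (d : WithBot ℕ) := by
    intro y' x' h1 h2 h3 hne
    have hab : cs.length y ≤ cs.length y' := hle _ _ h1
    have hbc : cs.length y' ≤ cs.length x' := hle _ _ h2
    have hcd : cs.length x' ≤ cs.length x := hle _ _ h3
    have hR : (kl.R y' x').natDegree = cs.length x' - cs.length y' := kl.R_natDegree h2
    have hmul : (kl.Q y y' * kl.R y' x' * kl.P x' x).natDegree ≤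
        (kl.Q y y').natDegree + (kl.R y' x').natDegree + (kl.P x' x).natDegree :=
      le_trans natDegree_mul_le (Nat.add_le_add_right natDegree_mul_le _)
    have hnat : (kl.Q y y' * kl.R y' x' * kl.P x' x).natDegree < d := by
      rcases eq_or_lt_of_le h1 with heq1 | hlt1 <;> rcases eq_or_lt_of_le h3 with heq2 | hlt2
      · exact absurd ⟨heq1.symm, heq2⟩ hne
      · have hQ0 : (kl.Q y y').natDegree = 0 := by rw [← heq1, kl.Q_diag]; exact natDegree_one
        have hP : (kl.P x' x).natDegree ≤ (cs.length x - cs.length x' - 1) / 2 :=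
          kl.P_natDegree_le hlt2
        have hPd : (cs.length x - cs.length x' - 1) / 2 ≤ cs.length x - cs.length x' - 1 :=
          Nat.div_le_self _ 2
        have hcd' := hstrict _ _ hlt2
        omega
      · have hP0 : (kl.P x' x).natDegree = 0 := by rw [heq2, kl.P_diag]; exact natDegree_one
        have hQ : (kl.Q y y').natDegree ≤ (cs.length y' - cs.length y - 1) / 2 :=
          kl.Q_natDegree_le hlt1
        have hQd : (cs.length y' - cs.length y - 1) / 2 ≤ cs.length y' - cs.length y - 1 :=
          Nat.div_le_self _ 2
        have hab' := hstrict _ _ hlt1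
        omega
      · have hQ : (kl.Q y y').natDegree ≤ (cs.length y' - cs.length y - 1) / 2 :=
          kl.Q_natDegree_le hlt1
        have hQd : (cs.length y' - cs.length y - 1) / 2 ≤ cs.length y' - cs.length y - 1 :=
          Nat.div_le_self _ 2
        have hP : (kl.P x' x).natDegree ≤ (cs.length x - cs.length x' - 1) / 2 :=
          kl.P_natDegree_le hlt2
        have hPd : (cs.length x - cs.length x' - 1) / 2 ≤ cs.length x - cs.length x' - 1 :=
          Nat.div_le_self _ 2
        have hab' := hstrict _ _ hlt1
        have hcd' := hstrict _ _ hlt2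
        omega
    exact lt_of_le_of_lt (degree_le_natDegree) (by exact_mod_cast hnat)
  have hy_mem : y ∈ Icc y x := mem_Icc.mpr ⟨le_rfl, hyx⟩
  have hx_mem : x ∈ Icc y x := mem_Icc.mpr ⟨hyx, le_rfl⟩
  have hXi : kl.Xi y x = kl.R y x +
      ((∑ x' ∈ (Icc y x).erase x, kl.Q y y * kl.R y x' * kl.P x' x) +
       ∑ y' ∈ (Icc y x).erase y, ∑ x' ∈ Icc y' x, kl.Q y y' * kl.R y' x' * kl.P x' x) := by
    rw [KLData.Xi, ← Finset.add_sum_erase _ _ hy_mem, ← Finset.add_sum_erase _ _ hx_mem,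
      kl.Q_diag, kl.P_diag, one_mul, mul_one, add_assoc]
  set E := (∑ x' ∈ (Icc y x).erase x, kl.Q y y * kl.R y x' * kl.P x' x) +
       ∑ y' ∈ (Icc y x).erase y, ∑ x' ∈ Icc y' x, kl.Q y y' * kl.R y' x' * kl.P x' x with hE
  have hbot : (⊥ : WithBot ℕ) < (d : WithBot ℕ) := by
    exact_mod_cast WithBot.bot_lt_coe d
  have hEdeg : E.degree < (d : WithBot ℕ) := by
    refine lt_of_le_of_lt (degree_add_le _ _) (max_lt ?_ ?_)
    · refine lt_of_le_of_lt (degree_sum_le _ _) ((Finset.sup_lt_iff hbot).mpr ?_)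
      intro x' hx'
      rw [Finset.mem_erase, Finset.mem_Icc] at hx'
      exact hterm y x' le_rfl hx'.2.1 hx'.2.2 (fun h => hx'.1 h.2)
    · refine lt_of_le_of_lt (degree_sum_le _ _) ((Finset.sup_lt_iff hbot).mpr ?_)
      intro y' hy'
      rw [Finset.mem_erase, Finset.mem_Icc] at hy'
      refine lt_of_le_of_lt (degree_sum_le _ _) ((Finset.sup_lt_iff hbot).mpr ?_)
      intro x' hx'
      rw [Finset.mem_Icc] at hx'
      exact hterm y' x' hy'.2.1 hx'.1 hx'.2 (fun h => hy'.1 h.1)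
  have hRdeg : (kl.R y x).degree = (d : WithBot ℕ) := by
    rw [Polynomial.degree_eq_natDegree (kl.R_monic hyx).ne_zero, kl.R_natDegree hyx]
  have hElt : E.degree < (kl.R y x).degree := hRdeg ▸ hEdeg
  have hmonic : (kl.Xi y x).Monic := by
    rw [hXi]
    exact (kl.R_monic hyx).add_of_left hElt
  have hdeg : (kl.Xi y x).degree = (d : WithBot ℕ) := by
    rw [hXi, degree_add_eq_left_of_degree_lt hElt, hRdeg]
  have hnatdeg : (kl.Xi y x).natDegree = d := natDegree_eq_of_degree_eq_some hdeg
  refine ⟨hmonic, ?_⟩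
  have := hle y x hyx
  omega
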